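/- Let d ≥ 1 and let S be a finite set of n points in ℝ^d. Then there exists a point c ∈ ℝ^d (a Tukey centerpoint) whose Tukey depth with respect to S is at least n/(d+1): for every nonzero vector v ∈ ℝ^d, the number of points x ∈ S with ⟨v, x − c⟩ ≥ 0 is at least n/(d+1). In particular, the supremum over y ∈ ℝ^d of the Tukey depth of y with respect to S is at least n/(d+1), so every Tukey median (a point maximizing Tukey depth) is a centerpoint. -/

import Mathlib

open scoped RealInnerProductSpace Classical

/-- The Tukey depth of a point `y` with respect to a finite set `S ⊆ ℝ^d`: the minimum,
over nonzero vectors `v`, of the number of points `x ∈ S` with `⟪v, x − y⟫ ≥ 0`. -/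
noncomputable def tukeyDepth {d : ℕ} (S : Finset (EuclideanSpace ℝ (Fin d)))
    (y : EuclideanSpace ℝ (Fin d)) : ℕ :=
  sInf {k : ℕ | ∃ v : EuclideanSpace ℝ (Fin d), v ≠ 0 ∧
    k = (S.filter fun x => 0 ≤ ⟪v, x - y⟫).card}

open Finset in
/-- Key lemma: the centerpoint exists, stated in ℕ form. -/
lemma exists_centerpoint_nat (d n : ℕ) (S : Finset (EuclideanSpace ℝ (Fin d)))
    (hS : S.card = n) :
    ∃ c : EuclideanSpace ℝ (Fin d), ∀ v : EuclideanSpace ℝ (Fin d),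
      n ≤ (d + 1) * (S.filter fun x => 0 ≤ ⟪v, x - c⟫).card := by
  classical
  set 𝒯 : Finset (Finset (EuclideanSpace ℝ (Fin d))) := S.powerset.filter (fun T => d * n < (d + 1) * T.card) with h𝒯
  -- Helly: the convex hulls of all T ∈ 𝒯 have a common point
  have hinter : (⋂ T ∈ 𝒯, convexHull ℝ (T : Set (EuclideanSpace ℝ (Fin d)))).Nonempty := by
    apply Convex.helly_theorem' (𝕜 := ℝ)
    · intro T _; exact convex_convexHull ℝ _
    · intro I hI hIcard
      rcases I.eq_empty_or_nonempty with rfl | ⟨T0, hT0⟩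
      · simp
      have hT0' : T0 ∈ 𝒯 := hI hT0
      have hn1 : 1 ≤ n := by
        rcases Finset.mem_filter.mp hT0' with ⟨hmem, hlt⟩
        have hsub : T0 ⊆ S := Finset.mem_powerset.mp hmem
        have : T0.card ≤ n := hS ▸ Finset.card_le_card hsub
        by_contra h
        have hn0 : n = 0 := by omega
        have : T0.card = 0 := by omega
        simp [this, hn0] at hlt
      -- count: union of complements has size < n
      have hsum : ∑ T ∈ I, (S \ T).card ≤ n - 1 := by
        have h1 : ∀ T ∈ I, (d + 1) * (S \ T).card ≤ n - 1 := by
          intro T hT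
          rcases Finset.mem_filter.mp (hI hT) with ⟨hmem, hlt⟩
          have hsub : T ⊆ S := Finset.mem_powerset.mp hmem
          have hcards : (S \ T).card = n - T.card := by
            rw [Finset.card_sdiff_of_subset hsub, hS]
          have hTn : T.card ≤ n := hS ▸ Finset.card_le_card hsub
          have hnt : n - T.card + T.card = n := by omega
          have e1 : (d + 1) * (S \ T).card + (d + 1) * T.card = (d + 1) * n := by
            rw [← Nat.mul_add, hcards, hnt]
          have e2 : (d + 1) * n = d * n + n := by ring
          have hA : (d + 1) * (S \ T).card < n := by linarith
          omega
        have h2 : (d + 1) * ∑ T ∈ I, (S \ T).card ≤ I.card * (n - 1) := by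
          rw [Finset.mul_sum]
          calc ∑ T ∈ I, (d + 1) * (S \ T).card ≤ ∑ _T ∈ I, (n - 1) :=
                Finset.sum_le_sum h1
            _ = I.card * (n - 1) := by rw [Finset.sum_const, smul_eq_mul]
        have hIc : I.card ≤ d + 1 := by
          simpa [finrank_euclideanSpace, Fintype.card_fin] using hIcard
        have : (d + 1) * ∑ T ∈ I, (S \ T).card ≤ (d + 1) * (n - 1) :=
          h2.trans (Nat.mul_le_mul_right _ hIc)
        exact Nat.le_of_mul_le_mul_left this (by omega)
      have hU : (I.biUnion fun T => S \ T).card < S.card := by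
        calc (I.biUnion fun T => S \ T).card ≤ ∑ T ∈ I, (S \ T).card :=
              Finset.card_biUnion_le
          _ ≤ n - 1 := hsum
          _ < n := by omega
          _ = S.card := hS.symm
      obtain ⟨x, hxS, hxU⟩ : ∃ x ∈ S, x ∉ I.biUnion fun T => S \ T := by
        by_contra h
        push_neg at h
        have : S ⊆ I.biUnion fun T => S \ T := h
        exact absurd (Finset.card_le_card this) (by omega)
      refine ⟨x, Set.mem_biInter fun T hT => ?_⟩
      apply subset_convexHull ℝ (T : Set (EuclideanSpace ℝ (Fin d)))
      simp only [Finset.mem_coe]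
      by_contra hx
      exact hxU (Finset.mem_biUnion.mpr ⟨T, hT, Finset.mem_sdiff.mpr ⟨hxS, hx⟩⟩)
  obtain ⟨c, hc⟩ := hinter
  refine ⟨c, fun v => ?_⟩
  by_contra hcon
  push_neg at hcon
  set k := (S.filter fun x => 0 ≤ ⟪v, x - c⟫).card with hk
  set B := S.filter fun x => ¬ 0 ≤ ⟪v, x - c⟫ with hB
  have hkB : k + B.card = n := by
    rw [hk, hB, Finset.card_filter_add_card_filter_not, hS]
  have hBT : B ∈ 𝒯 := by
    rw [h𝒯, Finset.mem_filter, Finset.mem_powerset]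
    refine ⟨Finset.filter_subset _ _, ?_⟩
    have hbk : B.card + k = n := by omega
    have e1 : (d + 1) * B.card + (d + 1) * k = (d + 1) * n := by
      rw [← Nat.mul_add, hbk]
    have e2 : (d + 1) * n = d * n + n := by ring
    have e3 : (d + 1) * k < n := hcon
    linarith
  have hcB : c ∈ convexHull ℝ (B : Set (EuclideanSpace ℝ (Fin d))) := by
    exact Set.mem_iInter₂.mp hc B hBT
  have hconv : Convex ℝ {x : EuclideanSpace ℝ (Fin d) | ⟪v, x⟫ < ⟪v, c⟫} := by
    apply convex_halfSpace_lt
    exact ⟨fun x y => inner_add_right _ _ _, fun r x => real_inner_smul_right _ _ _⟩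
  have hsub : (B : Set (EuclideanSpace ℝ (Fin d))) ⊆ {x : EuclideanSpace ℝ (Fin d) | ⟪v, x⟫ < ⟪v, c⟫} := by
    intro x hx
    rcases Finset.mem_filter.mp hx with ⟨_, hlt⟩
    have : ⟪v, x - c⟫ < 0 := lt_of_not_ge hlt
    rw [inner_sub_right] at this
    simpa using this
  have h2 : ⟪v, c⟫ < ⟪v, c⟫ := convexHull_min hsub hconv hcB
  exact lt_irrefl _ h2

/-- Centerpoint theorem: every finite set of `n` points in `ℝ^d` admits a Tukey
centerpoint `c`, of depth at least `n/(d+1)`.  In particular the supremum of the Tukey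
depth is at least `n/(d+1)`, so every Tukey median is a centerpoint. -/
theorem exists_tukey_centerpoint
    (d n : ℕ) (hd : 1 ≤ d) (S : Finset (EuclideanSpace ℝ (Fin d))) (hS : S.card = n) :
    (∃ c : EuclideanSpace ℝ (Fin d), ∀ v : EuclideanSpace ℝ (Fin d), v ≠ 0 →
        (n : ℝ) / (d + 1) ≤ ((S.filter fun x => 0 ≤ ⟪v, x - c⟫).card : ℝ))
    ∧ ((n : ℝ) / (d + 1) ≤ ⨆ y : EuclideanSpace ℝ (Fin d), (tukeyDepth S y : ℝ))
    ∧ (∀ m : EuclideanSpace ℝ (Fin d),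
        (∀ y : EuclideanSpace ℝ (Fin d), tukeyDepth S y ≤ tukeyDepth S m) →
        (n : ℝ) / (d + 1) ≤ (tukeyDepth S m : ℝ)) := by
  classical
  obtain ⟨c, hc⟩ := exists_centerpoint_nat d n S hS
  have hdpos : (0 : ℝ) < (d : ℝ) + 1 := by positivity
  have hbound : ∀ v : EuclideanSpace ℝ (Fin d),
      (n : ℝ) / (d + 1) ≤ ((S.filter fun x => 0 ≤ ⟪v, x - c⟫).card : ℝ) := by
    intro v
    rw [div_le_iff₀ hdpos]
    have := hc v
    have : (n : ℝ) ≤ ((d : ℝ) + 1) * ((S.filter fun x => 0 ≤ ⟪v, x - c⟫).card : ℝ) := by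
      exact_mod_cast this
    linarith
  have hv0 : (EuclideanSpace.single (⟨0, hd⟩ : Fin d) (1 : ℝ)) ≠ 0 := by
    intro h
    have := congrArg (fun w : EuclideanSpace ℝ (Fin d) => w (⟨0, hd⟩ : Fin d)) h
    simp [EuclideanSpace.single_apply] at this
  have hne : ∀ y : EuclideanSpace ℝ (Fin d),
      {k : ℕ | ∃ v : EuclideanSpace ℝ (Fin d), v ≠ 0 ∧
        k = (S.filter fun x => 0 ≤ ⟪v, x - y⟫).card}.Nonempty :=
    fun y => ⟨_, EuclideanSpace.single (⟨0, hd⟩ : Fin d) (1 : ℝ), hv0, rfl⟩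
  have hdepth_c : (n : ℝ) / (d + 1) ≤ (tukeyDepth S c : ℝ) := by
    obtain ⟨v, hv, hkeq⟩ := Nat.sInf_mem (hne c)
    rw [tukeyDepth, hkeq]
    exact hbound v
  have hle : ∀ y : EuclideanSpace ℝ (Fin d), tukeyDepth S y ≤ n := by
    intro y
    have h1 : tukeyDepth S y ≤
        (S.filter fun x => 0 ≤ ⟪EuclideanSpace.single (⟨0, hd⟩ : Fin d) (1 : ℝ), x - y⟫).card :=
      Nat.sInf_le ⟨_, hv0, rfl⟩
    exact h1.trans (hS ▸ Finset.card_filter_le _ _)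
  have hbdd : BddAbove (Set.range fun y : EuclideanSpace ℝ (Fin d) => (tukeyDepth S y : ℝ)) := by
    refine ⟨n, ?_⟩
    rintro x ⟨y, rfl⟩
    show (tukeyDepth S y : ℝ) ≤ (n : ℝ)
    exact_mod_cast hle y
  refine ⟨⟨c, fun v _ => hbound v⟩, hdepth_c.trans (le_ciSup hbdd c), fun m hm => ?_⟩
  exact hdepth_c.trans (by exact_mod_cast hm c)
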